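/- arXiv:1912.02681 — 4 statements merged into one kernel-verified Lean document; each statement's English description precedes it below -/
import Mathlib

section
/- For all real λ with 0 ≤ λ < 1, all K ≥ 3λ + 1, and all X ∈ [0,1] with 2 - 3λX ≥ 0, one has ((1-2λX)²/(1-λX))·(1-X) + K(1-λX)·X ≥ 1. -/
theorem stmt_0 (l K X : ℝ) (hl0 : 0 ≤ l) (hl1 : l < 1)
    (hK : 3 * l + 1 ≤ K) (hX0 : 0 ≤ X) (hX1 : X ≤ 1)
    (h2 : 0 ≤ 2 - 3 * l * X) :
    1 ≤ (1 - 2 * l * X) ^ 2 / (1 - l * X) * (1 - X) + K * (1 - l * X) * X := by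
  have ha : 0 < 1 - l * X := by nlinarith
  have heq : (1 - 2*l*X)^2/(1-l*X)*(1-X) + K*(1-l*X)*X
      = ((1-2*l*X)^2*(1-X) + K*(1-l*X)*X*(1-l*X))/(1-l*X) := by
    field_simp
  rw [heq, le_div_iff₀ ha]
  nlinarith [mul_nonneg (mul_nonneg (mul_nonneg hl0 (sq_nonneg X)) (by linarith : (0:ℝ) ≤ 1 - l)) h2,
    mul_le_mul_of_nonneg_right hK (mul_nonneg (mul_nonneg ha.le hX0) ha.le)]
end

section
/- For all real λ < 0, all K ≥ 1/(1-λ), and all X ∈ [0,1], one has ((1-2λX)²/(1-λX))·(1-X) + K(1-λX)·X ≥ 1. -/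
theorem stmt_2 (l K X : ℝ) (hl : l < 0) (hK : 1 / (1 - l) ≤ K)
    (hX0 : 0 ≤ X) (hX1 : X ≤ 1) :
    1 ≤ (1 - 2 * l * X) ^ 2 / (1 - l * X) * (1 - X) + K * (1 - l * X) * X := by
  have hl1 : (0:ℝ) < 1 - l := by linarith
  have hD : (0:ℝ) < 1 - l * X := by nlinarith
  have hK' : 1 ≤ K * (1 - l) := by
    rw [div_le_iff₀ hl1] at hK; linarith
  have key : (1 - 2 * l * X) ^ 2 / (1 - l * X) * (1 - X) + K * (1 - l * X) * X
      = ((1 - 2 * l * X) ^ 2 * (1 - X) + K * (1 - l * X) ^ 2 * X) / (1 - l * X) := by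
    field_simp
  rw [key, le_div_iff₀ hD]
  nlinarith [mul_nonneg hX0 (le_of_lt hl1), sq_nonneg (1 - l * X), sq_nonneg (l * X),
    mul_nonneg (mul_nonneg hX0 hX0) (neg_nonneg.mpr hl.le),
    mul_nonneg (sq_nonneg (1 - l * X)) hX0,
    mul_nonneg (mul_nonneg (sq_nonneg (1 - l * X)) hX0) (sub_nonneg.mpr hK'),
    mul_nonneg (mul_nonneg hX0 (sub_nonneg.mpr hX1)) (neg_nonneg.mpr hl.le),
    mul_nonneg (mul_nonneg (mul_nonneg hX0 (sub_nonneg.mpr hX1)) (neg_nonneg.mpr hl.le)) (neg_nonneg.mpr hl.le)]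
end

section
/- Let λ < 1 and K > 0. Suppose x, α : ℝ → ℝ are differentiable with x'(s) = cos α(s), sin α(s) ≠ 0, cos x(s) ≠ 0, 1 - 2λ sin²x(s) ≠ 0, and α'(s) = (tan x(s)/sin α(s))·[ ((1-λ sin²x(s))/(1-2λ sin²x(s)))·K - cos²α(s)·( (1-λ)/(1-λ sin²x(s)) + 4λcos²x(s)/(1-2λ sin²x(s)) ) ] for all s. Then the function E(s) = ((1-2λ sin²x(s))²/(1-λ sin²x(s)))·cos²x(s)·cos²α(s) + K(1-λ sin²x(s))·sin²x(s) is constant. -/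
open Real

theorem stmt_9 (l K : ℝ) (hl : l < 1) (hK : 0 < K)
    (x α : ℝ → ℝ)
    (hx : ∀ s, HasDerivAt x (Real.cos (α s)) s)
    (hsin : ∀ s, Real.sin (α s) ≠ 0)
    (hcos : ∀ s, Real.cos (x s) ≠ 0)
    (hden : ∀ s, 1 - 2 * l * Real.sin (x s) ^ 2 ≠ 0)
    (hα : ∀ s, HasDerivAt α
      (Real.tan (x s) / Real.sin (α s) *
        ((1 - l * Real.sin (x s) ^ 2) / (1 - 2 * l * Real.sin (x s) ^ 2) * K
          - Real.cos (α s) ^ 2 *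
            ((1 - l) / (1 - l * Real.sin (x s) ^ 2)
              + 4 * l * Real.cos (x s) ^ 2 / (1 - 2 * l * Real.sin (x s) ^ 2)))) s) :
    ∀ s t : ℝ,
      (1 - 2 * l * Real.sin (x s) ^ 2) ^ 2 / (1 - l * Real.sin (x s) ^ 2) *
          Real.cos (x s) ^ 2 * Real.cos (α s) ^ 2
        + K * (1 - l * Real.sin (x s) ^ 2) * Real.sin (x s) ^ 2 =
      (1 - 2 * l * Real.sin (x t) ^ 2) ^ 2 / (1 - l * Real.sin (x t) ^ 2) *
          Real.cos (x t) ^ 2 * Real.cos (α t) ^ 2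
        + K * (1 - l * Real.sin (x t) ^ 2) * Real.sin (x t) ^ 2 := by
  have hpos : ∀ s, (0:ℝ) < 1 - l * Real.sin (x s) ^ 2 := by
    intro s
    rcases le_or_gt l 0 with h | h
    · nlinarith [sq_nonneg (Real.sin (x s))]
    · nlinarith [Real.sin_sq_le_one (x s)]
  have hne : ∀ s, (1:ℝ) - l * Real.sin (x s) ^ 2 ≠ 0 := fun s => ne_of_gt (hpos s)
  have key : ∀ s, HasDerivAt (fun y =>
      (1 - 2 * l * Real.sin (x y) ^ 2) ^ 2 / (1 - l * Real.sin (x y) ^ 2) *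
          Real.cos (x y) ^ 2 * Real.cos (α y) ^ 2
        + K * (1 - l * Real.sin (x y) ^ 2) * Real.sin (x y) ^ 2) 0 s := by
    intro s
    have hu : HasDerivAt (fun y => Real.sin (x y)) (Real.cos (x s) * Real.cos (α s)) s :=
      (hx s).sin
    have hc : HasDerivAt (fun y => Real.cos (x y)) (-Real.sin (x s) * Real.cos (α s)) s :=
      (hx s).cos
    have hca := (hα s).cos
    have hu2 := hu.pow 2
    have h1 := (hu2.const_mul (2 * l)).const_sub 1
    have hden2 := (hu2.const_mul l).const_sub 1
    have hN := h1.pow 2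
    have hQ := hN.div hden2 (hne s)
    have hc2 := hc.pow 2
    have hca2 := hca.pow 2
    have hE := ((hQ.mul hc2).mul hca2).add ((hden2.mul hu2).const_mul K)
    refine HasDerivAt.congr_deriv (HasDerivAt.congr_of_eventuallyEq hE (Filter.EventuallyEq.of_eq ?_)) (Eq.symm ?_)
    · funext y; simp only [Pi.pow_apply, Pi.mul_apply, Pi.div_apply, Pi.add_apply]; ring
    · rw [Real.tan_eq_sin_div_cos]
      have pyth : Real.sin (x s) ^ 2 + Real.cos (x s) ^ 2 = 1 := Real.sin_sq_add_cos_sq (x s)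
      push_cast
      simp only [Pi.pow_apply, Pi.mul_apply, Pi.div_apply, Pi.add_apply]
      have e1 := hne s
      have e2 := hden s
      have e3 := hcos s
      have e4 := hsin s
      field_simp
      linear_combination ((-2:ℝ) * l * Real.sin (x s) * Real.cos (x s) * Real.cos (α s) ^ 3 + (8:ℝ) * l ^ 2 * Real.sin (x s) ^ 3 * Real.cos (x s) * Real.cos (α s) ^ 3 + (-8:ℝ) * l ^ 3 * Real.sin (x s) ^ 5 * Real.cos (x s) * Real.cos (α s) ^ 3) * pyth
  intro s t
  exact (is_const_of_deriv_eq_zero (fun y => (key y).differentiableAt)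
    (fun y => (key y).deriv) s t)
end

section
/- Let λ < 1, λ ≠ 0, and suppose α₀, x₀ are real numbers with cos α₀ ≠ 0 such that for x(s) = (cos α₀)s + x₀ the function K(s) = (cos²α₀/(1-λ sin²x(s))²)·[4λ² sin⁴x(s) - 2λ(λ+3) sin²x(s) + 3λ + 1] is constant in s. Then cos α₀ = 0, a contradiction; i.e., there is no such solution: if cos α₀ ≠ 0 and λ ≠ 0, the function K(s) is non-constant. -/
theorem stmt_15 (l α₀ x₀ : ℝ) (hl1 : l < 1) (hl0 : l ≠ 0)
    (hα : Real.cos α₀ ≠ 0)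
    (x : ℝ → ℝ) (hx : ∀ s, x s = Real.cos α₀ * s + x₀) :
    ¬ ∀ s t : ℝ,
      Real.cos α₀ ^ 2 / (1 - l * Real.sin (x s) ^ 2) ^ 2 *
        (4 * l ^ 2 * Real.sin (x s) ^ 4 - 2 * l * (l + 3) * Real.sin (x s) ^ 2
          + 3 * l + 1) =
      Real.cos α₀ ^ 2 / (1 - l * Real.sin (x t) ^ 2) ^ 2 *
        (4 * l ^ 2 * Real.sin (x t) ^ 4 - 2 * l * (l + 3) * Real.sin (x t) ^ 2
          + 3 * l + 1) := by
  intro h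
  have h1 := h ((0 - x₀) / Real.cos α₀) ((Real.pi / 2 - x₀) / Real.cos α₀)
  rw [hx, hx] at h1
  rw [mul_div_cancel₀ _ hα, mul_div_cancel₀ _ hα] at h1
  simp only [sub_add_cancel, zero_sub, neg_add_cancel] at h1
  rw [Real.sin_zero, Real.sin_pi_div_two] at h1
  have hc : Real.cos α₀ ^ 2 ≠ 0 := pow_ne_zero 2 hα
  have hl : (1 - l) ≠ 0 := by linarith
  field_simp at h1
  have h2 : (3 * l + 1) * (1 - l) ^ 2 = 4 * l ^ 2 - 2 * l * (l + 3) + 3 * l + 1 := by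
    apply mul_left_cancel₀ hc
    linear_combination Real.cos α₀ ^ 2 * h1
  have h3 : l * ((3 * l - 4) * (l - 1)) = 0 := by linear_combination h2
  rcases mul_eq_zero.mp h3 with h4 | h4
  · exact hl0 h4
  · rcases mul_eq_zero.mp h4 with h5 | h5 <;> linarith
end
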